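/- Consider the M-layer networked sampled-data system with star inter-layer structure: the state matrix Φ_s ∈ ℝ^{MNn×MNn} has diagonal blocks Φ^{K,K} = I_N ⊗ e^{A^K h} + W^K ⊗ 𝓗^K(h), first-column blocks Φ^{K,1} = D^{K,1} ⊗ 𝓟^{K,1}(h) for K = 2, …, M, and zeros elsewhere, and the input matrix is Ψ_s = diag(Ψ^{1,1}, …, Ψ^{M,M}) with Ψ^{K,K} = Δ^K ⊗ 𝓑^K(h). Suppose that for every θ ∈ ℂ and every tuple ξ_1, …, ξ_M ∈ ℂ^{1×Nn}, not all zero, satisfying ξ_K(θ I_{Nn} − Φ^{K,K}) = 0 for all K = 2, …, M and ξ_1(θ I_{Nn} − Φ^{1,1}) = Σ_{K=2}^{M} ξ_K Φ^{K,1}, the concatenated row vector [ξ_1 Ψ^{1,1}, …, ξ_M Ψ^{M,M}] is nonzero. Then the discrete-time system x(k+1) = Φ_s x(k) + Ψ_s u(k) is controllable. -/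

import Mathlib

open Matrix
open scoped Kronecker

/-- Matrix exponential of a real square matrix. -/
noncomputable def matExp {k : Type*} [Fintype k] [DecidableEq k]
    (A : Matrix k k ℝ) : Matrix k k ℝ := NormedSpace.exp A

/-- Entrywise integral `∫₀ʰ e^{Aτ} dτ`. -/
noncomputable def intExp {k : Type*} [Fintype k] [DecidableEq k]
    (A : Matrix k k ℝ) (h : ℝ) : Matrix k k ℝ :=
  Matrix.of fun i j => ∫ τ in (0:ℝ)..h, matExp (τ • A) i j

/-- A real matrix regarded as a complex matrix entrywise. -/
def cmap {a b : Type*} (M : Matrix a b ℝ) : Matrix a b ℂ := M.map Complex.ofReal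

/-- `θ` is a (complex) eigenvalue of the complex matrix `M`. -/
def IsEig {k : Type*} [Fintype k] (M : Matrix k k ℂ) (θ : ℂ) : Prop :=
  ∃ v : k → ℂ, v ≠ 0 ∧ M.mulVec v = θ • v

/-- Controllability of the discrete-time linear system `x(k+1) = F x(k) + G u(k)`:
every target state can be reached from every initial state in finite time. -/
def Controllable {q r : Type*} [Fintype q] [Fintype r]
    (F : Matrix q q ℝ) (G : Matrix q r ℝ) : Prop :=
  ∀ x₀ xf : q → ℝ, ∃ (T : ℕ) (u : ℕ → r → ℝ) (x : ℕ → q → ℝ),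
    x 0 = x₀ ∧ (∀ k, x (k + 1) = F.mulVec (x k) + G.mulVec (u k)) ∧ x T = xf


set_option linter.unusedSectionVars false

section Reach
variable {q r : Type*} [Fintype q] [Fintype r] [DecidableEq q]

/-- vectors reachable from 0 in `T` steps -/
def reachT (F : Matrix q q ℝ) (G : Matrix q r ℝ) (T : ℕ) : Submodule ℝ (q → ℝ) where
  carrier := {y | ∃ u : ℕ → r → ℝ, y = ∑ k ∈ Finset.range T, (F ^ k * G).mulVec (u k)}
  add_mem' := by
    rintro x y ⟨ux, rfl⟩ ⟨uy, rfl⟩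
    exact ⟨ux + uy, by simp [Matrix.mulVec_add, Finset.sum_add_distrib]⟩
  zero_mem' := ⟨0, by simp⟩
  smul_mem' := by
    rintro c x ⟨u, rfl⟩
    exact ⟨c • u, by simp [Matrix.mulVec_smul, Finset.smul_sum]⟩

lemma reachT_mono (F : Matrix q q ℝ) (G : Matrix q r ℝ) {T T' : ℕ} (hT : T ≤ T') :
    reachT F G T ≤ reachT F G T' := by
  rintro y ⟨u, rfl⟩
  refine ⟨fun k => if k < T then u k else 0, ?_⟩
  rw [← Finset.sum_subset (Finset.range_subset_range.2 hT)
    (fun x _ hx => by simp [Finset.mem_range.not.1 hx])]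
  exact Finset.sum_congr rfl fun k hk => by simp [Finset.mem_range.1 hk]

lemma mem_reachT (F : Matrix q q ℝ) (G : Matrix q r ℝ) (k : ℕ) (u : r → ℝ) :
    (F ^ k * G).mulVec u ∈ reachT F G (k + 1) := by
  refine ⟨fun j => if j = k then u else 0, ?_⟩
  rw [Finset.sum_eq_single k (fun j _ hjk => by simp [hjk])
    (fun hk => absurd (Finset.self_mem_range_succ k) hk)]
  simp

end Reach


section PBH
variable {q r : Type*} [Fintype q] [Fintype r] [DecidableEq q]

lemma cmap_mul {a b c : Type*} [Fintype b] (A : Matrix a b ℝ) (B : Matrix b c ℝ) :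
    cmap (A * B) = cmap A * cmap B := by
  ext i j; simp [cmap, Matrix.mul_apply]

lemma cmap_pow (A : Matrix q q ℝ) (k : ℕ) :
    cmap (A ^ k) = cmap A ^ k := by
  induction k with
  | zero => ext i j; simp [cmap, Matrix.one_apply, apply_ite]
  | succ k ih => rw [pow_succ, pow_succ, cmap_mul, ih]

lemma vecMul_cmap {a b : Type*} [Fintype a] (η : a → ℝ) (A : Matrix a b ℝ) :
    (fun i => (η i : ℂ)) ᵥ* cmap A = fun j => ((η ᵥ* A) j : ℂ) := by
  funext j; simp [Matrix.vecMul, cmap, dotProduct]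

lemma reachT_eq_top (F : Matrix q q ℝ) (G : Matrix q r ℝ)
    (hpbh : ∀ (θ : ℂ) (η : q → ℂ), η ≠ 0 → η ᵥ* cmap F = θ • η → η ᵥ* cmap G ≠ 0) :
    ∃ T, reachT F G T = ⊤ := by
  classical
  set R : Submodule ℝ (q → ℝ) := ⨆ T, reachT F G T with hR
  have hdir : Directed (· ≤ ·) (reachT F G) := fun T T' =>
    ⟨max T T', reachT_mono F G (le_max_left _ _), reachT_mono F G (le_max_right _ _)⟩
  have hRtop : R = ⊤ := by
    by_contra hne
    obtain ⟨f, hf0, hfbot⟩ :=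
      R.exists_dual_map_eq_bot_of_lt_top (lt_top_iff_ne_top.2 hne) inferInstance
    have hfR : ∀ y ∈ R, f y = 0 := by
      intro y hy
      have : f y ∈ R.map f := Submodule.mem_map_of_mem hy
      rwa [hfbot, Submodule.mem_bot] at this
    set η : q → ℝ := fun i => f (Pi.single i 1) with hηdef
    have hfx : ∀ x : q → ℝ, f x = ∑ i, x i * η i := by
      intro x
      conv_lhs => rw [← Finset.univ_sum_single x]
      rw [map_sum]
      refine Finset.sum_congr rfl fun i _ => ?_
      have : (Pi.single i (x i) : q → ℝ) = x i • (Pi.single i 1 : q → ℝ) := by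
        funext j; simp [Pi.single_apply, mul_ite]
      rw [this, _root_.map_smul, smul_eq_mul, hηdef]
    have hann : ∀ k : ℕ, η ᵥ* (F ^ k * G) = 0 := by
      intro k
      funext j
      have hcol : (F ^ k * G) *ᵥ Pi.single j 1 ∈ R :=
        le_iSup (reachT F G) (k + 1) (mem_reachT F G k _)
      have h0 := hfR _ hcol
      rw [hfx] at h0
      simp only [Matrix.mulVec_single, mul_one] at h0
      simpa [Matrix.vecMul, dotProduct, mul_comm] using h0
    -- complexify
    set Fc := cmap F
    set Gc := cmap G
    set V : Submodule ℂ (q → ℂ) :=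
      { carrier := {ζ | ∀ k : ℕ, ζ ᵥ* (Fc ^ k * Gc) = 0}
        add_mem' := fun ha hb k => by rw [Matrix.add_vecMul, ha k, hb k, add_zero]
        zero_mem' := fun k => Matrix.zero_vecMul _
        smul_mem' := fun c a ha k => by rw [Matrix.smul_vecMul, ha k, smul_zero] } with hV
    have hmemV : ∀ ζ : q → ℂ, ζ ∈ V ↔ ∀ k : ℕ, ζ ᵥ* (Fc ^ k * Gc) = 0 := fun ζ => Iff.rfl
    set ηc : q → ℂ := fun i => (η i : ℂ) with hηc
    have hηcV : ηc ∈ V := by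
      intro k
      rw [hηc, ← cmap_pow, ← cmap_mul, vecMul_cmap, hann k]
      funext j; simp
    have hηc0 : ηc ≠ 0 := by
      intro hc
      apply hf0
      have hη0 : η = 0 := funext fun i =>
        Complex.ofReal_eq_zero.mp (by simpa [hηc] using congrFun hc i)
      exact LinearMap.ext fun x => by rw [hfx, hη0]; simp
    haveI : Nontrivial V :=
      nontrivial_of_ne ⟨ηc, hηcV⟩ 0 (fun hc => hηc0 (congrArg Subtype.val hc))
    have hinv : ∀ x ∈ V, Fc.vecMulLinear x ∈ V := by
      intro x hx k
      rw [Matrix.vecMulLinear_apply, Matrix.vecMul_vecMul]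
      have h3 : Fc * (Fc ^ k * Gc) = Fc ^ (k + 1) * Gc := by
        rw [pow_succ', Matrix.mul_assoc]
      rw [h3]
      exact hx (k + 1)
    set e : Module.End ℂ V := (Matrix.vecMulLinear Fc).restrict hinv with he
    obtain ⟨μ, hμ⟩ := Module.End.exists_eigenvalue e
    obtain ⟨v, hv⟩ := hμ.exists_hasEigenvector
    have hv0 : (v : q → ℂ) ≠ 0 := fun hc => hv.2 (Subtype.ext hc)
    have heig : (v : q → ℂ) ᵥ* Fc = μ • (v : q → ℂ) := by
      have h1 := hv.1
      rw [Module.End.mem_eigenspace_iff] at h1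
      have h2 := congrArg Subtype.val h1
      simpa [he, LinearMap.restrict_apply, Matrix.vecMulLinear_apply] using h2
    refine hpbh μ v hv0 heig ?_
    have := v.2 0
    rwa [pow_zero, Matrix.one_mul] at this
  -- extract a single T
  have hsingle : ∀ i : q, ∃ T, Pi.single i (1 : ℝ) ∈ reachT F G T := by
    intro i
    have : Pi.single i (1 : ℝ) ∈ R := hRtop ▸ Submodule.mem_top
    rwa [hR, Submodule.mem_iSup_of_directed _ hdir] at this
  choose Ti hTi using hsingle
  refine ⟨Finset.univ.sup Ti, ?_⟩
  rw [eq_top_iff]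
  intro x _
  have hx : x = ∑ i, Pi.single i (x i) := (Finset.univ_sum_single x).symm
  rw [hx]
  refine Submodule.sum_mem _ fun i _ => ?_
  have : (Pi.single i (x i) : q → ℝ) = x i • (Pi.single i 1 : q → ℝ) := by
    funext j; simp [Pi.single_apply, mul_ite]
  rw [this]
  exact Submodule.smul_mem _ _
    (reachT_mono F G (Finset.le_sup (Finset.mem_univ i)) (hTi i))

end PBH

section Ctrl
variable {q r : Type*} [Fintype q] [Fintype r] [DecidableEq q]

lemma mulVec_sum' {α : Type*} (s : Finset α) (A : Matrix q q ℝ) (g : α → q → ℝ) :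
    A *ᵥ (∑ i ∈ s, g i) = ∑ i ∈ s, A *ᵥ g i := by
  exact map_sum A.mulVecLin g s

theorem pbh_controllable (F : Matrix q q ℝ) (G : Matrix q r ℝ)
    (hpbh : ∀ (θ : ℂ) (η : q → ℂ), η ≠ 0 → η ᵥ* cmap F = θ • η → η ᵥ* cmap G ≠ 0) :
    ∀ x₀ xf : q → ℝ, ∃ (T : ℕ) (u : ℕ → r → ℝ) (x : ℕ → q → ℝ),
      x 0 = x₀ ∧ (∀ k, x (k + 1) = F.mulVec (x k) + G.mulVec (u k)) ∧ x T = xf := by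
  obtain ⟨T, hT⟩ := reachT_eq_top F G hpbh
  intro x₀ xf
  have hy : xf - (F ^ T) *ᵥ x₀ ∈ reachT F G T := hT ▸ Submodule.mem_top
  obtain ⟨u, hu⟩ := hy
  set v : ℕ → r → ℝ := fun k => u (T - 1 - k) with hv
  refine ⟨T, v,
    fun j => (F ^ j) *ᵥ x₀ + ∑ k ∈ Finset.range j, (F ^ (j - 1 - k) * G) *ᵥ v k,
    by simp, ?_, ?_⟩
  · intro k
    show F ^ (k + 1) *ᵥ x₀ + ∑ j ∈ Finset.range (k + 1), (F ^ (k + 1 - 1 - j) * G) *ᵥ v j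
        = F *ᵥ (F ^ k *ᵥ x₀ + ∑ j ∈ Finset.range k, (F ^ (k - 1 - j) * G) *ᵥ v j) + G *ᵥ v k
    have hterm : ∀ j ∈ Finset.range k,
        (F * (F ^ (k - 1 - j) * G)) *ᵥ v j = (F ^ (k - j) * G) *ᵥ v j := by
      intro j hj
      have hj' := Finset.mem_range.1 hj
      have h1 : F * F ^ (k - 1 - j) = F ^ (k - j) := by
        have h2 : k - j = (k - 1 - j) + 1 := by omega
        rw [h2, pow_succ']
      rw [← Matrix.mul_assoc, h1]
    have hsum : F *ᵥ (∑ j ∈ Finset.range k, (F ^ (k - 1 - j) * G) *ᵥ v j)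
        = ∑ j ∈ Finset.range k, (F ^ (k - j) * G) *ᵥ v j := by
      rw [mulVec_sum']
      refine Finset.sum_congr rfl fun j hj => ?_
      rw [Matrix.mulVec_mulVec, hterm j hj]
    rw [Finset.sum_range_succ]
    simp only [Nat.add_sub_cancel, Nat.sub_self, pow_zero, Matrix.one_mul]
    rw [Matrix.mulVec_add, hsum, Matrix.mulVec_mulVec, ← pow_succ']
    abel
  · show F ^ T *ᵥ x₀ + ∑ k ∈ Finset.range T, (F ^ (T - 1 - k) * G) *ᵥ v k = xf
    have hr : (∑ k ∈ Finset.range T, (F ^ (T - 1 - k) * G) *ᵥ v k)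
        = ∑ k ∈ Finset.range T, (F ^ k * G) *ᵥ u k :=
      Finset.sum_range_reflect (fun k => (F ^ k * G) *ᵥ u k) T
    rw [hr, ← hu]
    abel

end Ctrl

lemma vecMul_smul_one_sub {k : Type*} [Fintype k] [DecidableEq k]
    (x : k → ℂ) (θ : ℂ) (Ac : Matrix k k ℂ) :
    x ᵥ* (θ • (1 : Matrix k k ℂ) - Ac) = θ • x - x ᵥ* Ac := by
  funext j
  simp [Matrix.vecMul, dotProduct, Matrix.sub_apply, Matrix.one_apply, mul_sub,
    Finset.sum_sub_distrib, mul_ite, mul_comm]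

/-- sufficient controllability condition for the deep networked
sampled-data system with star inter-layer structure (Theorem 6 in the paper).
Layers are 0-indexed: layer `j` here is layer `j+1` of the paper; for `j ≥ 1`,
`D j` and `P j` describe the inter-layer block from the central layer 0 into layer `j`. -/
theorem starStructure_controllable
    (M N n m p : ℕ) (hM : 2 ≤ M) (hN : 2 ≤ N)
    (A : ℕ → Matrix (Fin n) (Fin n) ℝ) (B : ℕ → Matrix (Fin n) (Fin p) ℝ)
    (C : ℕ → Matrix (Fin m) (Fin n) ℝ) (H : ℕ → Matrix (Fin n) (Fin m) ℝ)
    (P : ℕ → Matrix (Fin n) (Fin m) ℝ)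
    (W : ℕ → Matrix (Fin N) (Fin N) ℝ) (D : ℕ → Matrix (Fin N) (Fin N) ℝ)
    (Δ : ℕ → Matrix (Fin N) (Fin N) ℝ)
    (hΔd : ∀ j, (Δ j).IsDiag) (hΔ01 : ∀ j i, Δ j i i = 0 ∨ Δ j i i = 1)
    (h : ℝ) (hh : 0 < h)
    (Φd Φcol : ℕ → Matrix (Fin N × Fin n) (Fin N × Fin n) ℝ)
    (Ψd : ℕ → Matrix (Fin N × Fin n) (Fin N × Fin p) ℝ)
    (hΦd : ∀ j, Φd j = (1 : Matrix (Fin N) (Fin N) ℝ) ⊗ₖ matExp (h • A j)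
        + W j ⊗ₖ (intExp (A j) h * H j * C j))
    (hΦcol : ∀ j, Φcol j = D j ⊗ₖ (intExp (A j) h * P j * C 0))
    (hΨd : ∀ j, Ψd j = Δ j ⊗ₖ (intExp (A j) h * B j))
    (Φs : Matrix (Fin M × (Fin N × Fin n)) (Fin M × (Fin N × Fin n)) ℝ)
    (Ψs : Matrix (Fin M × (Fin N × Fin n)) (Fin M × (Fin N × Fin p)) ℝ)
    (hΦs : Φs = Matrix.of fun q r =>
      if (q.1 : ℕ) = (r.1 : ℕ) then Φd (q.1 : ℕ) q.2 r.2
      else if (r.1 : ℕ) = 0 then Φcol (q.1 : ℕ) q.2 r.2 else 0)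
    (hΨs : Ψs = Matrix.of fun q r =>
      if (q.1 : ℕ) = (r.1 : ℕ) then Ψd (q.1 : ℕ) q.2 r.2 else 0)
    -- for every not-all-zero inter-layer coupling group,
    -- the concatenation [ξ_1 Ψ^{1,1}, …, ξ_M Ψ^{M,M}] is nonzero
    (hyp : ∀ (θ : ℂ) (ξ : ℕ → Fin N × Fin n → ℂ),
      (∃ j < M, ξ j ≠ 0) →
      (∀ K, 1 ≤ K → K < M →
        ξ K ᵥ* (θ • (1 : Matrix (Fin N × Fin n) (Fin N × Fin n) ℂ)
            - cmap (Φd K)) = 0) →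
      ξ 0 ᵥ* (θ • (1 : Matrix (Fin N × Fin n) (Fin N × Fin n) ℂ)
            - cmap (Φd 0))
          = ∑ K ∈ Finset.Ico 1 M, ξ K ᵥ* cmap (Φcol K) →
      ∃ j < M, ξ j ᵥ* cmap (Ψd j) ≠ 0) :
    Controllable Φs Ψs := by
  have hM0 : 0 < M := by omega
  set K₀ : Fin M := ⟨0, hM0⟩ with hK₀
  refine pbh_controllable Φs Ψs ?_
  intro θ η hη0 heig
  classical
  set ξ : ℕ → (Fin N × Fin n → ℂ) := fun j =>
    if hj : j < M then (fun x => η (⟨j, hj⟩, x)) else 0 with hξdef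
  have hξval : ∀ i : Fin M, ξ (i : ℕ) = fun x => η (i, x) := by
    intro i
    simp [hξdef, i.isLt]
  have hΦent : ∀ (i K : Fin M) (y x : Fin N × Fin n),
      cmap Φs (i, y) (K, x) = if (i : ℕ) = (K : ℕ) then ((Φd (i : ℕ) y x : ℝ) : ℂ)
        else if (K : ℕ) = 0 then ((Φcol (i : ℕ) y x : ℝ) : ℂ) else 0 := by
    intro i K y x
    simp only [cmap, hΦs, Matrix.map_apply, Matrix.of_apply, apply_ite Complex.ofReal,
      Complex.ofReal_zero]
  have hΨent : ∀ (i K : Fin M) (y : Fin N × Fin n) (x : Fin N × Fin p),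
      cmap Ψs (i, y) (K, x) = if (i : ℕ) = (K : ℕ) then ((Ψd (i : ℕ) y x : ℝ) : ℂ)
        else 0 := by
    intro i K y x
    simp only [cmap, hΨs, Matrix.map_apply, Matrix.of_apply, apply_ite Complex.ofReal,
      Complex.ofReal_zero]
  have hentry : ∀ (K : Fin M) (x : Fin N × Fin n),
      (∑ i : Fin M, ∑ y : Fin N × Fin n, η (i, y) * cmap Φs (i, y) (K, x))
        = θ * η (K, x) := by
    intro K x
    have h1 := congrFun heig (K, x)
    rw [Pi.smul_apply, smul_eq_mul] at h1
    rw [← h1]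
    rw [show (η ᵥ* cmap Φs) (K, x)
      = ∑ iy : Fin M × (Fin N × Fin n), η iy * cmap Φs iy (K, x) from rfl]
    rw [Fintype.sum_prod_type]
  -- condition 2
  have hcond2 : ∀ K, 1 ≤ K → K < M →
      ξ K ᵥ* (θ • (1 : Matrix (Fin N × Fin n) (Fin N × Fin n) ℂ) - cmap (Φd K)) = 0 := by
    intro K h1K hKM
    have hmain : ξ K ᵥ* cmap (Φd K) = θ • ξ K := by
      funext x
      set Kf : Fin M := ⟨K, hKM⟩ with hKf
      have hKne0 : (Kf : ℕ) ≠ 0 := by show K ≠ 0; omega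
      have h3 := hentry Kf x
      have h4 : ∀ i : Fin M, (∑ y : Fin N × Fin n, η (i, y) * cmap Φs (i, y) (Kf, x))
          = if i = Kf then ∑ y : Fin N × Fin n, η (Kf, y) * ((Φd K y x : ℝ) : ℂ)
            else 0 := by
        intro i
        by_cases hi : i = Kf
        · subst hi
          rw [if_pos rfl]
          refine Finset.sum_congr rfl fun y _ => ?_
          rw [hΦent, if_pos rfl]
        · rw [if_neg hi]
          refine Finset.sum_eq_zero fun y _ => ?_
          rw [hΦent, if_neg (fun hc => hi (Fin.ext hc)), if_neg hKne0, mul_zero]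
      rw [Finset.sum_congr rfl (fun i _ => h4 i),
        Finset.sum_ite_eq' Finset.univ Kf, if_pos (Finset.mem_univ Kf)] at h3
      have h5 : (ξ K ᵥ* cmap (Φd K)) x
          = ∑ y : Fin N × Fin n, η (Kf, y) * ((Φd K y x : ℝ) : ℂ) := by
        rw [show (ξ K ᵥ* cmap (Φd K)) x
          = ∑ y : Fin N × Fin n, ξ K y * cmap (Φd K) y x from rfl]
        refine Finset.sum_congr rfl fun y _ => ?_
        rw [show ξ K y = η (Kf, y) from congrFun (hξval Kf) y]
        rfl
      rw [h5, h3, Pi.smul_apply, smul_eq_mul,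
        show ξ K x = η (Kf, x) from congrFun (hξval Kf) x]
    rw [vecMul_smul_one_sub, hmain, sub_self]
  -- condition on layer 0
  have hξ0 : ξ 0 = fun x => η (K₀, x) := hξval K₀
  have hcond0 : ξ 0 ᵥ* (θ • (1 : Matrix (Fin N × Fin n) (Fin N × Fin n) ℂ) - cmap (Φd 0))
      = ∑ K ∈ Finset.Ico 1 M, ξ K ᵥ* cmap (Φcol K) := by
    rw [vecMul_smul_one_sub]
    funext x
    have h3 := hentry K₀ x
    have h4 : ∀ i : Fin M, (∑ y : Fin N × Fin n, η (i, y) * cmap Φs (i, y) (K₀, x))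
        = (∑ y : Fin N × Fin n, η (i, y) * ((Φcol (i : ℕ) y x : ℝ) : ℂ))
          + (if i = K₀ then
              (∑ y : Fin N × Fin n, η (K₀, y) * ((Φd 0 y x : ℝ) : ℂ))
                - ∑ y : Fin N × Fin n, η (K₀, y) * ((Φcol 0 y x : ℝ) : ℂ)
            else 0) := by
      intro i
      by_cases hi : i = K₀
      · subst hi
        rw [if_pos rfl]
        have h5 : ∀ y : Fin N × Fin n, cmap Φs (K₀, y) (K₀, x) = ((Φd 0 y x : ℝ) : ℂ) :=
          fun y => by rw [hΦent, if_pos rfl]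
        rw [Finset.sum_congr rfl fun y _ => by rw [h5 y]]
        have hv : ((K₀ : Fin M) : ℕ) = 0 := rfl
        rw [hv]
        ring
      · rw [if_neg hi, add_zero]
        refine Finset.sum_congr rfl fun y _ => ?_
        rw [hΦent, if_neg (fun hc => hi (Fin.ext hc)), if_pos rfl]
    rw [Finset.sum_congr rfl (fun i _ => h4 i), Finset.sum_add_distrib,
      Finset.sum_ite_eq' Finset.univ K₀, if_pos (Finset.mem_univ K₀)] at h3
    have hIco : Finset.Ico 1 M = (Finset.range M).erase 0 := by
      ext a
      simp only [Finset.mem_Ico, Finset.mem_erase, Finset.mem_range]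
      omega
    have hLHS : (θ • ξ 0 - ξ 0 ᵥ* cmap (Φd 0)) x
        = θ * η (K₀, x) - ∑ y : Fin N × Fin n, η (K₀, y) * ((Φd 0 y x : ℝ) : ℂ) := by
      rw [Pi.sub_apply, Pi.smul_apply, smul_eq_mul,
        show ξ 0 x = η (K₀, x) from congrFun hξ0 x]
      congr 1
      rw [show (ξ 0 ᵥ* cmap (Φd 0)) x
        = ∑ y : Fin N × Fin n, ξ 0 y * cmap (Φd 0) y x from rfl]
      refine Finset.sum_congr rfl fun y _ => ?_
      rw [show ξ 0 y = η (K₀, y) from congrFun hξ0 y]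
      rfl
    have hRHS : (∑ K ∈ Finset.Ico 1 M, ξ K ᵥ* cmap (Φcol K)) x
        = (∑ i : Fin M, ∑ y : Fin N × Fin n, η (i, y) * ((Φcol (i : ℕ) y x : ℝ) : ℂ))
          - ∑ y : Fin N × Fin n, η (K₀, y) * ((Φcol 0 y x : ℝ) : ℂ) := by
      rw [Finset.sum_apply]
      have hterm : ∀ (K : ℕ) (hKM : K < M), (ξ K ᵥ* cmap (Φcol K)) x
          = ∑ y : Fin N × Fin n, η (⟨K, hKM⟩, y) * ((Φcol K y x : ℝ) : ℂ) := by
        intro K hKM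
        rw [show (ξ K ᵥ* cmap (Φcol K)) x
          = ∑ y : Fin N × Fin n, ξ K y * cmap (Φcol K) y x from rfl]
        refine Finset.sum_congr rfl fun y _ => ?_
        rw [show ξ K y = η (⟨K, hKM⟩, y) from congrFun (hξval ⟨K, hKM⟩) y]
        rfl
      rw [hIco, Finset.sum_erase_eq_sub (by simpa using hM0)]
      congr 1
      · rw [← Fin.sum_univ_eq_sum_range (fun K => (ξ K ᵥ* cmap (Φcol K)) x) M]
        refine Finset.sum_congr rfl fun i _ => ?_
        rw [hterm (i : ℕ) i.isLt]
      · exact hterm 0 hM0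
    rw [hLHS, hRHS]
    linear_combination -h3
  -- condition 1: ξ not all zero
  have hcond1 : ∃ j < M, ξ j ≠ 0 := by
    obtain ⟨⟨i, y⟩, hpt⟩ := Function.ne_iff.1 hη0
    refine ⟨(i : ℕ), i.isLt, ?_⟩
    rw [hξval i]
    intro hc
    exact hpt (congrFun hc y)
  obtain ⟨j, hjM, hne⟩ := hyp θ ξ hcond1 hcond2 hcond0
  intro hc
  apply hne
  funext x
  have h6 := congrFun hc (⟨j, hjM⟩, x)
  rw [show (η ᵥ* cmap Ψs) (⟨j, hjM⟩, x)
    = ∑ iy : Fin M × (Fin N × Fin n), η iy * cmap Ψs iy (⟨j, hjM⟩, x) from rfl,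
    Fintype.sum_prod_type] at h6
  have h7 : ∀ i : Fin M,
      (∑ y : Fin N × Fin n, η (i, y) * cmap Ψs (i, y) (⟨j, hjM⟩, x))
      = if i = (⟨j, hjM⟩ : Fin M) then
          ∑ y : Fin N × Fin n, η (⟨j, hjM⟩, y) * ((Ψd j y x : ℝ) : ℂ) else 0 := by
    intro i
    by_cases hi : i = (⟨j, hjM⟩ : Fin M)
    · subst hi
      rw [if_pos rfl]
      refine Finset.sum_congr rfl fun y _ => ?_
      rw [hΨent, if_pos rfl]
    · rw [if_neg hi]
      refine Finset.sum_eq_zero fun y _ => ?_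
      rw [hΨent, if_neg (fun hcc => hi (Fin.ext hcc)), mul_zero]
  rw [Finset.sum_congr rfl (fun i _ => h7 i),
    Finset.sum_ite_eq' Finset.univ (⟨j, hjM⟩ : Fin M),
    if_pos (Finset.mem_univ _)] at h6
  simp only [Pi.zero_apply] at h6
  show (ξ j ᵥ* cmap (Ψd j)) x = 0
  rw [show (ξ j ᵥ* cmap (Ψd j)) x
    = ∑ y : Fin N × Fin n, ξ j y * cmap (Ψd j) y x from rfl, ← h6]
  refine Finset.sum_congr rfl fun y _ => ?_
  rw [show ξ j y = η (⟨j, hjM⟩, y) from congrFun (hξval ⟨j, hjM⟩) y]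
  rfl
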